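/- For 0 < a < b, let T(a,b) be the triangle with vertices (0,0), (a,0), (a, √(b² − a²)) and Φ_{a,b}(ρ) its circular transform. Then Φ_{a,b}(ρ) = arccos(a/b) for 0 < ρ ≤ a, Φ_{a,b}(ρ) = arccos(a/b) − arccos(a/ρ) for a ≤ ρ < b, and Φ_{a,b}(ρ) = 0 for ρ ≥ b. -/

import Mathlib

open Real MeasureTheory

noncomputable abbrev E2 : Type := EuclideanSpace ℝ (Fin 2)

/-- The point `(a, b)` of the Euclidean plane. -/
noncomputable def pt2 (a b : ℝ) : E2 := (EuclideanSpace.equiv (Fin 2) ℝ).symm ![a, b]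

/-- The circular transform of a set `S ⊆ ℝ²`: `R_S(ρ) = ∫₀^{2π} 1_S(ρ cos θ, ρ sin θ) dθ`. -/
noncomputable def circTransform (S : Set E2) (ρ : ℝ) : ℝ :=
  ∫ θ in (0 : ℝ)..(2 * π), S.indicator (fun _ => (1 : ℝ)) (pt2 (ρ * cos θ) (ρ * sin θ))

/-- The right triangle `T(a,b) = conv((0,0), (a,0), (a, √(b² − a²)))`. -/
noncomputable def Tri (a b : ℝ) : Set E2 :=
  convexHull ℝ {pt2 0 0, pt2 a 0, pt2 a (Real.sqrt (b ^ 2 - a ^ 2))}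

/-- `Φ_{a,b}`, the circular transform of the right triangle `T(a,b)`. -/
noncomputable def Phi (a b ρ : ℝ) : ℝ := circTransform (Tri a b) ρ

lemma pt2_apply0 (x y : ℝ) : pt2 x y 0 = x := by simp [pt2]
lemma pt2_apply1 (x y : ℝ) : pt2 x y 1 = y := by simp [pt2]

lemma pt2_comb (c d s t u v : ℝ) :
    c • pt2 s t + d • pt2 u v = pt2 (c*s+d*u) (c*t+d*v) := by
  ext i
  fin_cases i <;>
    simp [pt2, PiLp.add_apply, PiLp.smul_apply, smul_eq_mul]

lemma mem_Tri {a b : ℝ} (ha : 0 < a) (hab : a < b) (x y : ℝ) :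
    pt2 x y ∈ Tri a b ↔ 0 ≤ x ∧ x ≤ a ∧ 0 ≤ y ∧ a * y ≤ Real.sqrt (b ^ 2 - a ^ 2) * x := by
  set h : ℝ := Real.sqrt (b ^ 2 - a ^ 2) with hh
  have hhpos : 0 < h := Real.sqrt_pos.mpr (by nlinarith)
  constructor
  · intro hmem
    have hsub : Tri a b ⊆ {p : E2 | 0 ≤ p 0 ∧ p 0 ≤ a ∧ 0 ≤ p 1 ∧ a * p 1 ≤ h * p 0} := by
      apply convexHull_min
      · rintro p (rfl | rfl | rfl) <;>
          simp only [Set.mem_setOf_eq, pt2_apply0, pt2_apply1] <;>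
          exact ⟨by nlinarith, by nlinarith, by nlinarith, by nlinarith⟩
      · intro p hp q hq c d hc hd hcd
        simp only [Set.mem_setOf_eq, PiLp.add_apply, PiLp.smul_apply, smul_eq_mul] at *
        refine ⟨?_, ?_, ?_, ?_⟩ <;> nlinarith [hp.1, hp.2.1, hp.2.2.1, hp.2.2.2,
          hq.1, hq.2.1, hq.2.2.1, hq.2.2.2]
    have := hsub hmem
    simpa only [Set.mem_setOf_eq, pt2_apply0, pt2_apply1] using this
  · rintro ⟨hx0, hxa, hy0, hxy⟩
    have hTconv : Convex ℝ (Tri a b) := convex_convexHull ℝ _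
    have hA : pt2 0 0 ∈ Tri a b := subset_convexHull ℝ _ (by simp)
    have hB : pt2 a 0 ∈ Tri a b := subset_convexHull ℝ _ (by simp)
    have hC : pt2 a h ∈ Tri a b := subset_convexHull ℝ _ (by simp [hh])
    rcases eq_or_lt_of_le hx0 with hx | hx
    · have hy : y = 0 := le_antisymm (by nlinarith) hy0
      rw [← hx, hy]; exact hA
    · have hq : pt2 a (a*y/x) ∈ Tri a b := by
        have hs0 : 0 ≤ (a*y/x)/h := by positivity
        have hayx : a*y/x ≤ h := by
          rw [div_le_iff₀ hx]; nlinarith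
        have hs1 : (a*y/x)/h ≤ 1 := by
          rw [div_le_one hhpos]; exact hayx
        have := hTconv.segment_subset hB hC
          (show pt2 a (a*y/x) ∈ segment ℝ (pt2 a 0) (pt2 a h) from
            ⟨1 - (a*y/x)/h, (a*y/x)/h, by linarith, hs0, by ring, by
              have e1 : (1 - (a*y/x)/h)*a + ((a*y/x)/h)*a = a := by ring
              have e2 : (1 - (a*y/x)/h)*0 + ((a*y/x)/h)*h = a*y/x := by
                field_simp; ring
              rw [pt2_comb, e1, e2]⟩)
        exact this
      have := hTconv.segment_subset hA hq
        (show pt2 x y ∈ segment ℝ (pt2 0 0) (pt2 a (a*y/x)) from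
          ⟨1 - x/a, x/a, by
            have : x/a ≤ 1 := (div_le_one ha).mpr hxa
            linarith, by positivity, by ring, by
            have e1 : (1 - x/a)*0 + (x/a)*a = x := by field_simp; ring
            have e2 : (1 - x/a)*0 + (x/a)*(a*y/x) = y := by
              field_simp; ring
            rw [pt2_comb, e1, e2]⟩)
      exact this

lemma cond_iff {a b : ℝ} (ha : 0 < a) (hab : a < b) {ρ : ℝ} (hρ : 0 < ρ) (θ : ℝ) :
    pt2 (ρ * cos θ) (ρ * sin θ) ∈ Tri a b ↔
      (0 ≤ sin θ ∧ a * sin θ ≤ Real.sqrt (b ^ 2 - a ^ 2) * cos θ ∧ ρ * cos θ ≤ a) := by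
  set h : ℝ := Real.sqrt (b ^ 2 - a ^ 2) with hh
  have hhpos : 0 < h := Real.sqrt_pos.mpr (by nlinarith)
  rw [mem_Tri ha hab]
  constructor
  · rintro ⟨h1, h2, h3, h4⟩
    refine ⟨le_of_mul_le_mul_left (by simpa using h3) hρ, ?_, h2⟩
    have h4' : ρ * (a * sin θ) ≤ ρ * (h * cos θ) := by
      have e1 : ρ * (a * sin θ) = a * (ρ * sin θ) := by ring
      have e2 : ρ * (h * cos θ) = h * (ρ * cos θ) := by ring
      rw [e1, e2]; exact h4
    exact le_of_mul_le_mul_left h4' hρ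
  · rintro ⟨h1, h2, h3⟩
    have hc : 0 ≤ cos θ := by nlinarith
    exact ⟨by positivity, h3, by positivity, by nlinarith⟩

lemma alpha_eq {a b : ℝ} (ha : 0 < a) (hab : a < b) :
    Real.arccos (a / b) = Real.arctan (Real.sqrt (b ^ 2 - a ^ 2) / a) := by
  set h : ℝ := Real.sqrt (b ^ 2 - a ^ 2) with hh
  have hb : 0 < b := lt_trans ha hab
  have hhpos : 0 < h := Real.sqrt_pos.mpr (by nlinarith)
  have hsq : h ^ 2 = b ^ 2 - a ^ 2 := Real.sq_sqrt (by nlinarith)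
  have h0 : (0:ℝ) ≤ Real.arctan (h / a) := by
    rw [← Real.arctan_zero]
    exact Real.arctan_strictMono.monotone (by positivity)
  apply Real.arccos_eq_of_eq_cos h0
    (le_trans (Real.arctan_lt_pi_div_two _).le (by linarith [Real.pi_pos]))
  rw [Real.cos_arctan]
  rw [show 1 + (h/a)^2 = (b/a)^2 by field_simp; nlinarith]
  rw [Real.sqrt_sq (by positivity)]
  field_simp

lemma keyF {a h : ℝ} (ha : 0 < a) (hh : 0 < h) {θ : ℝ}
    (h0 : 0 ≤ θ) (h1 : θ ≤ Real.arctan (h / a)) : a * Real.sin θ ≤ h * Real.cos θ := by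
  have hα2 : Real.arctan (h/a) < π/2 := Real.arctan_lt_pi_div_two _
  have hθ2 : θ < π/2 := lt_of_le_of_lt h1 hα2
  have hmem : θ ∈ Set.Ioo (-(π/2)) (π/2) := ⟨by linarith [Real.pi_pos], hθ2⟩
  have hmem' : Real.arctan (h/a) ∈ Set.Ioo (-(π/2)) (π/2) := Real.arctan_mem_Ioo _
  have htan : Real.tan θ ≤ h / a := by
    have := Real.strictMonoOn_tan.monotoneOn hmem hmem' h1
    rwa [Real.tan_arctan] at this
  have hcos : 0 < Real.cos θ := Real.cos_pos_of_mem_Ioo hmem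
  rw [Real.tan_eq_sin_div_cos] at htan
  have := (div_le_div_iff₀ hcos ha).mp htan
  linarith

lemma keyR {a h : ℝ} (ha : 0 < a) (hh : 0 < h) {θ : ℝ}
    (h0 : 0 ≤ θ) (h2 : θ < 2 * π) (hs : 0 ≤ Real.sin θ)
    (hle : a * Real.sin θ ≤ h * Real.cos θ) : θ ≤ Real.arctan (h / a) := by
  by_contra hc
  push_neg at hc
  have hpi := Real.pi_pos
  rcases lt_or_ge θ (π/2) with hlt | hge
  · have hmem : θ ∈ Set.Ioo (-(π/2)) (π/2) := ⟨by linarith, hlt⟩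
    have hmem' : Real.arctan (h/a) ∈ Set.Ioo (-(π/2)) (π/2) := Real.arctan_mem_Ioo _
    have htan : h / a < Real.tan θ := by
      have := Real.strictMonoOn_tan hmem' hmem hc
      rwa [Real.tan_arctan] at this
    have hcos : 0 < Real.cos θ := Real.cos_pos_of_mem_Ioo hmem
    rw [Real.tan_eq_sin_div_cos] at htan
    have := (div_lt_div_iff₀ ha hcos).mp htan
    linarith
  · rcases le_or_gt θ π with hle' | hgt
    · have hcos : Real.cos θ ≤ 0 := Real.cos_nonpos_of_pi_div_two_le_of_le hge (by linarith)
      have h5 := Real.sin_sq_add_cos_sq θ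
      have h8 : a * Real.sin θ = 0 :=
        le_antisymm (hle.trans (mul_nonpos_of_nonneg_of_nonpos hh.le hcos))
          (mul_nonneg ha.le hs)
      have hs0 : Real.sin θ = 0 := by
        rcases mul_eq_zero.mp h8 with h9 | h9
        · exact absurd h9 (ne_of_gt ha)
        · exact h9
      have hc0 : Real.cos θ = 0 := by
        have : 0 ≤ h * Real.cos θ := by rw [hs0] at hle; linarith
        nlinarith
      rw [hs0, hc0] at h5; norm_num at h5
    · have : Real.sin θ < 0 := by
        have h6 : 0 < Real.sin (θ - π) := Real.sin_pos_of_pos_of_lt_pi (by linarith) (by linarith)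
        have h7 : Real.sin ((θ - π) + π) = -Real.sin (θ - π) := Real.sin_add_pi _
        rw [show (θ - π) + π = θ by ring] at h7
        linarith
      linarith

lemma tri_measurable (a b : ℝ) : MeasurableSet (Tri a b) := by
  have : Set.Finite {pt2 0 0, pt2 a 0, pt2 a (Real.sqrt (b ^ 2 - a ^ 2))} := by
    apply Set.Finite.insert; apply Set.Finite.insert; exact Set.finite_singleton _
  exact (this.isCompact_convexHull ℝ).isClosed.measurableSet

lemma g_continuous (ρ : ℝ) : Continuous (fun θ : ℝ => pt2 (ρ * Real.cos θ) (ρ * Real.sin θ)) := by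
  unfold pt2
  apply (EuclideanSpace.equiv (Fin 2) ℝ).symm.continuous.comp
  refine continuous_pi fun i => ?_
  fin_cases i
  · have hc : Continuous fun θ : ℝ => ρ * Real.cos θ := by fun_prop
    simpa using hc
  · have hc : Continuous fun θ : ℝ => ρ * Real.sin θ := by fun_prop
    simpa using hc

lemma f_intble (a b ρ : ℝ) (u v : ℝ) :
    IntervalIntegrable
      (fun θ : ℝ => (Tri a b).indicator (fun _ => (1:ℝ)) (pt2 (ρ * Real.cos θ) (ρ * Real.sin θ)))
      volume u v := by
  set g : ℝ → E2 := fun θ => pt2 (ρ * Real.cos θ) (ρ * Real.sin θ) with hg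
  have heq : (fun θ : ℝ => (Tri a b).indicator (fun _ => (1:ℝ)) (g θ))
      = (g ⁻¹' (Tri a b)).indicator (fun _ => (1:ℝ)) := by
    funext θ
    rw [← Set.indicator_comp_right g]
    rfl
  rw [show (fun θ : ℝ => (Tri a b).indicator (fun _ => (1:ℝ)) (pt2 (ρ * Real.cos θ) (ρ * Real.sin θ)))
      = (g ⁻¹' (Tri a b)).indicator (fun _ => (1:ℝ)) from heq]
  have hP : MeasurableSet (g ⁻¹' (Tri a b)) :=
    (tri_measurable a b).preimage (g_continuous ρ).measurable
  apply MeasureTheory.IntegrableOn.intervalIntegrable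
  exact (MeasureTheory.integrableOn_const
    (isCompact_uIcc.measure_lt_top.ne)).indicator hP

lemma ae_ne_real (c : ℝ) : ∀ᵐ x : ℝ, x ≠ c := by
  have h := measure_eq_zero_iff_ae_notMem.mp (Real.volume_singleton (a := c))
  filter_upwards [h] with x hx
  simpa using hx

/-- For `0 < a < b`, the circular transform `Φ_{a,b}` of `T(a,b)` is given by:
`arccos(a/b)` for `0 < ρ ≤ a`, `arccos(a/b) − arccos(a/ρ)` for `a ≤ ρ < b`,
and `0` for `ρ ≥ b`. -/
theorem stmt_15 (a b : ℝ) (ha : 0 < a) (hab : a < b) :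
    (∀ ρ : ℝ, 0 < ρ → ρ ≤ a → Phi a b ρ = Real.arccos (a / b)) ∧
    (∀ ρ : ℝ, a ≤ ρ → ρ < b → Phi a b ρ = Real.arccos (a / b) - Real.arccos (a / ρ)) ∧
    (∀ ρ : ℝ, b ≤ ρ → Phi a b ρ = 0) := by
  have hb : 0 < b := lt_trans ha hab
  set h : ℝ := Real.sqrt (b ^ 2 - a ^ 2) with hhdef
  have hhpos : 0 < h := Real.sqrt_pos.mpr (by nlinarith)
  set α : ℝ := Real.arctan (h / a) with hαdef
  have hαeq : Real.arccos (a / b) = α := alpha_eq ha hab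
  have hpi : 0 < π := Real.pi_pos
  have hα0 : 0 ≤ α := hαeq ▸ Real.arccos_nonneg _
  have hα2 : α < π / 2 := Real.arctan_lt_pi_div_two _
  have hcosα : Real.cos α = a / b := by
    rw [← hαeq]
    have h01 : (0:ℝ) ≤ a/b := by positivity
    exact Real.cos_arccos (by linarith) ((div_le_one hb).mpr hab.le)
  -- F ρ is the integrand
  have hPhi : ∀ ρ : ℝ, Phi a b ρ =
      ∫ θ in (0:ℝ)..(2*π), (Tri a b).indicator (fun _ => (1:ℝ))
        (pt2 (ρ * Real.cos θ) (ρ * Real.sin θ)) := fun ρ => rfl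
  -- the tail integral over [α, 2π] vanishes for every ρ > 0
  have tail : ∀ ρ : ℝ, 0 < ρ →
      (∫ θ in α..(2*π), (Tri a b).indicator (fun _ => (1:ℝ))
        (pt2 (ρ * Real.cos θ) (ρ * Real.sin θ))) = 0 := by
    intro ρ hρ
    have key : (∫ θ in α..(2*π), (Tri a b).indicator (fun _ => (1:ℝ))
        (pt2 (ρ * Real.cos θ) (ρ * Real.sin θ))) = ∫ _ in α..(2*π), (0:ℝ) := by
      apply intervalIntegral.integral_congr_ae
      filter_upwards [ae_ne_real (2*π)] with x hxne hx
      rw [Set.uIoc_of_le (by linarith)] at hx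
      apply Set.indicator_of_notMem
      intro hmem
      rw [cond_iff ha hab hρ] at hmem
      have hx2 : x < 2*π := lt_of_le_of_ne hx.2 hxne
      have := keyR ha hhpos (le_trans hα0 hx.1.le) hx2 hmem.1 hmem.2.1
      exact absurd this (not_le.mpr hx.1)
    simpa using key
  refine ⟨?_, ?_, ?_⟩
  · -- 0 < ρ ≤ a
    intro ρ hρ0 hρa
    have hsplit := intervalIntegral.integral_add_adjacent_intervals
      (f_intble a b ρ 0 α) (f_intble a b ρ α (2*π))
    have h1 : (∫ θ in (0:ℝ)..α, (Tri a b).indicator (fun _ => (1:ℝ))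
        (pt2 (ρ * Real.cos θ) (ρ * Real.sin θ))) = α := by
      rw [intervalIntegral.integral_congr (g := fun _ => (1:ℝ)) ?_]
      · simp
      · intro θ hθ
        rw [Set.uIcc_of_le hα0] at hθ
        apply Set.indicator_of_mem
        rw [cond_iff ha hab hρ0]
        refine ⟨Real.sin_nonneg_of_nonneg_of_le_pi hθ.1 (by linarith [hθ.2]), 
          keyF ha hhpos hθ.1 hθ.2, ?_⟩
        nlinarith [Real.cos_le_one θ, Real.cos_pos_of_mem_Ioo
          (show θ ∈ Set.Ioo (-(π/2)) (π/2) from ⟨by linarith [hθ.1], by linarith [hθ.2]⟩)]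
    rw [hPhi, ← hsplit, h1, tail ρ hρ0, hαeq]
    ring
  · -- a ≤ ρ < b
    intro ρ hρa hρb
    have hρ0 : 0 < ρ := lt_of_lt_of_le ha hρa
    set β : ℝ := Real.arccos (a / ρ) with hβdef
    have haρ1 : a / ρ ≤ 1 := (div_le_one hρ0).mpr hρa
    have haρ0 : (0:ℝ) ≤ a / ρ := by positivity
    have hcosβ : Real.cos β = a / ρ := Real.cos_arccos (by linarith) haρ1
    have hβ0 : 0 ≤ β := Real.arccos_nonneg _
    have hβπ : β ≤ π := Real.arccos_le_pi _
    have hαπ : α ≤ π := by linarith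
    have hβα : β ≤ α := by
      have hc : Real.cos α ≤ Real.cos β := by
        rw [hcosα, hcosβ]
        gcongr
      exact (Real.strictAntiOn_cos.le_iff_ge ⟨hα0, hαπ⟩ ⟨hβ0, hβπ⟩).mp hc
    have hs1 := intervalIntegral.integral_add_adjacent_intervals
      (f_intble a b ρ 0 β) (f_intble a b ρ β (2*π))
    have hs2 := intervalIntegral.integral_add_adjacent_intervals
      (f_intble a b ρ β α) (f_intble a b ρ α (2*π))
    have p1 : (∫ θ in (0:ℝ)..β, (Tri a b).indicator (fun _ => (1:ℝ))
        (pt2 (ρ * Real.cos θ) (ρ * Real.sin θ))) = 0 := by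
      have key : (∫ θ in (0:ℝ)..β, (Tri a b).indicator (fun _ => (1:ℝ))
          (pt2 (ρ * Real.cos θ) (ρ * Real.sin θ))) = ∫ _ in (0:ℝ)..β, (0:ℝ) := by
        apply intervalIntegral.integral_congr_ae
        filter_upwards [ae_ne_real β] with x hxne hx
        rw [Set.uIoc_of_le hβ0] at hx
        apply Set.indicator_of_notMem
        intro hmem
        rw [cond_iff ha hab hρ0] at hmem
        have hxβ : x < β := lt_of_le_of_ne hx.2 hxne
        have hcc : Real.cos β < Real.cos x :=
          Real.strictAntiOn_cos ⟨hx.1.le, by linarith⟩ ⟨hβ0, hβπ⟩ hxβ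
        rw [hcosβ] at hcc
        have : ρ * (a/ρ) < ρ * Real.cos x := by
          exact mul_lt_mul_of_pos_left hcc hρ0
        rw [mul_div_cancel₀ a (ne_of_gt hρ0)] at this
        linarith [hmem.2.2]
      simpa using key
    have p2 : (∫ θ in β..α, (Tri a b).indicator (fun _ => (1:ℝ))
        (pt2 (ρ * Real.cos θ) (ρ * Real.sin θ))) = α - β := by
      rw [intervalIntegral.integral_congr (g := fun _ => (1:ℝ)) ?_]
      · simp
      · intro θ hθ
        rw [Set.uIcc_of_le hβα] at hθ
        apply Set.indicator_of_mem
        rw [cond_iff ha hab hρ0]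
        have hθ0 : 0 ≤ θ := le_trans hβ0 hθ.1
        refine ⟨Real.sin_nonneg_of_nonneg_of_le_pi hθ0 (by linarith [hθ.2]),
          keyF ha hhpos hθ0 hθ.2, ?_⟩
        have hcc : Real.cos θ ≤ Real.cos β :=
          Real.strictAntiOn_cos.antitoneOn ⟨hβ0, hβπ⟩ ⟨hθ0, by linarith [hθ.2]⟩ hθ.1
        rw [hcosβ] at hcc
        have : ρ * Real.cos θ ≤ ρ * (a/ρ) := mul_le_mul_of_nonneg_left hcc hρ0.le
        rwa [mul_div_cancel₀ a (ne_of_gt hρ0)] at this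
    rw [hPhi, ← hs1, ← hs2, p1, p2, tail ρ hρ0, hαeq]
    ring
  · -- b ≤ ρ
    intro ρ hbρ
    have hρ0 : 0 < ρ := lt_of_lt_of_le hb hbρ
    have hαπ : α ≤ π := by linarith
    rw [hPhi]
    have key : (∫ θ in (0:ℝ)..(2*π), (Tri a b).indicator (fun _ => (1:ℝ))
        (pt2 (ρ * Real.cos θ) (ρ * Real.sin θ))) = ∫ _ in (0:ℝ)..(2*π), (0:ℝ) := by
      apply intervalIntegral.integral_congr_ae
      filter_upwards [ae_ne_real α, ae_ne_real (2*π)] with x hxα hx2π hx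
      rw [Set.uIoc_of_le (by linarith)] at hx
      apply Set.indicator_of_notMem
      intro hmem
      rw [cond_iff ha hab hρ0] at hmem
      have hx2 : x < 2*π := lt_of_le_of_ne hx.2 hx2π
      have hxle : x ≤ α := keyR ha hhpos hx.1.le hx2 hmem.1 hmem.2.1
      have hxlt : x < α := lt_of_le_of_ne hxle hxα
      have hcc : Real.cos α < Real.cos x :=
        Real.strictAntiOn_cos ⟨hx.1.le, by linarith⟩ ⟨hα0, hαπ⟩ hxlt
      rw [hcosα] at hcc
      have h1 : ρ * (a/b) < ρ * Real.cos x := mul_lt_mul_of_pos_left hcc hρ0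
      have h2 : a ≤ ρ * (a/b) := by
        have e : b * (a/b) = a := by field_simp
        nlinarith [mul_le_mul_of_nonneg_right hbρ (show (0:ℝ) ≤ a/b by positivity)]
      linarith [hmem.2.2]
    simpa using key
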